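/- arXiv:1401.7504 — 2 statements merged into one kernel-verified Lean document; each statement's English description precedes it below -/
import Mathlib

section
/- For every (x₁,x₂,x₃) ∈ 𝔛 the first component of the Levi form of the CR structure of 𝔛 vanishes identically, namely |D₃₁|² = |x₁·D₁₂ + x₃·D₂₃|². -/
noncomputable section

open Complex ComplexConjugate

/-- Membership in Falbel's cross-ratio variety 𝔛. -/
def memX (x₁ x₂ x₃ : ℂ) : Prop :=
  x₁ ≠ 0 ∧ x₂ ≠ 0 ∧ x₃ ≠ 0 ∧
  ‖x₂‖ = ‖x₁‖ * ‖x₃‖ ∧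
  2 * (‖x₁‖) ^ 2 * x₃.re =
    (‖x₁‖) ^ 2 + (‖x₂‖) ^ 2 - 2 * x₁.re - 2 * x₂.re + 1

/-- The minor `D₂₃`. -/
def D23 (x₂ x₃ : ℂ) : ℂ :=
  ((((‖x₂‖) ^ 2 / (‖x₃‖) ^ 2 : ℝ)) : ℂ) *
    (conj x₂ * conj x₃ - conj x₂ - conj x₃)

/-- The minor `D₃₁`. -/
def D31 (x₁ x₃ : ℂ) : ℂ :=
  conj x₃ * (((‖x₁‖) ^ 2 : ℝ) : ℂ) * (1 + conj x₁ * conj x₃ - conj x₁)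

/-- The minor `D₁₂`. -/
def D12 (x₁ x₂ : ℂ) : ℂ :=
  (conj x₂ / x₁) * (1 - conj x₁ - conj x₂)

/-- The first component of the Levi form of the CR structure of 𝔛 vanishes
identically: `L₁ = |D₃₁|² − |x₁·D₁₂ + x₃·D₂₃|² = 0` on 𝔛. -/
theorem levi_first_component_vanishes (x₁ x₂ x₃ : ℂ) (hx : memX x₁ x₂ x₃) :
    (‖D31 x₁ x₃‖) ^ 2 =
      (‖x₁ * D12 x₁ x₂ + x₃ * D23 x₂ x₃‖) ^ 2 := by
  obtain ⟨h₁, h₂, h₃, habs, hre⟩ := hx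
  have e1 : x₂ * conj x₂ = x₁ * conj x₁ * (x₃ * conj x₃) := by
    rw [Complex.mul_conj, Complex.mul_conj, Complex.mul_conj]
    have h : Complex.normSq x₂ = Complex.normSq x₁ * Complex.normSq x₃ := by
      rw [← Complex.sq_norm, ← Complex.sq_norm, ← Complex.sq_norm, habs]; ring
    rw [h]; push_cast; ring
  have hre' : Complex.normSq x₁ * (2 * x₃.re) =
      Complex.normSq x₁ + Complex.normSq x₂ - 2 * x₁.re - 2 * x₂.re + 1 := by
    rw [← Complex.sq_norm, ← Complex.sq_norm]; linear_combination hre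
  have e2 : x₁ * conj x₁ * (x₃ + conj x₃) =
      x₁ * conj x₁ + x₂ * conj x₂ - (x₁ + conj x₁) - (x₂ + conj x₂) + 1 := by
    rw [Complex.mul_conj, Complex.mul_conj,
        Complex.add_conj, Complex.add_conj, Complex.add_conj]
    have h := congrArg (Complex.ofReal) hre'
    push_cast at h ⊢
    linear_combination h
  have hcast1 : ((‖x₁‖ ^ 2 : ℝ) : ℂ) = x₁ * conj x₁ := by
    rw [Complex.sq_norm]; exact (Complex.mul_conj x₁).symm
  have hcast2 : (((‖x₂‖ ^ 2 / ‖x₃‖ ^ 2 : ℝ)) : ℂ) = x₁ * conj x₁ := by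
    have h3' : ‖x₃‖ ≠ 0 := norm_ne_zero_iff.mpr h₃
    rw [habs, mul_pow, mul_div_assoc, div_self (pow_ne_zero 2 h3'), mul_one]
    exact hcast1
  have hd12 : x₁ * D12 x₁ x₂ = conj x₂ * (1 - conj x₁ - conj x₂) := by
    unfold D12; field_simp
  have hd23 : x₃ * D23 x₂ x₃ =
      x₁ * conj x₁ * x₃ * (conj x₂ * conj x₃ - conj x₂ - conj x₃) := by
    unfold D23; rw [hcast2]; ring
  have main : D31 x₁ x₃ * conj (D31 x₁ x₃) =
      (x₁ * D12 x₁ x₂ + x₃ * D23 x₂ x₃) * conj (x₁ * D12 x₁ x₂ + x₃ * D23 x₂ x₃) := by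
    rw [map_add, hd12, hd23]
    unfold D31
    rw [hcast1]
    simp only [map_mul, map_add, map_sub, map_one, Complex.conj_conj, Complex.conj_ofReal]
    linear_combination
      (0 - 1*(conj x₂) + 1*(conj x₂)^2 - 1*x₂ + 3*x₂*(conj x₂) - 2*x₂*(conj x₂)^2 + 1*x₂^2 - 2*x₂^2*(conj x₂) + 1*x₂^2*(conj x₂)^2 + 1*(conj x₁)*(conj x₂) - 1*(conj x₁)*x₂*(conj x₂) + 1*x₁*x₂ - 1*x₁*x₂*(conj x₂) - 1*x₁*(conj x₁) + 1*x₁*(conj x₁)*x₃*(conj x₃) + 1*x₁*(conj x₁)*(conj x₂)*x₃ - 1*x₁*(conj x₁)*(conj x₂)*x₃*(conj x₃) + 1*x₁*(conj x₁)*x₂*(conj x₃) - 1*x₁*(conj x₁)*x₂*x₃*(conj x₃) - 1*x₁*(conj x₁)*x₂*(conj x₂)*(conj x₃) - 1*x₁*(conj x₁)*x₂*(conj x₂)*x₃ + 1*x₁*(conj x₁)*x₂*(conj x₂)*x₃*(conj x₃) + 1*x₁*(conj x₁)^2 - 1*x₁*(conj x₁)^2*(conj x₃) + 1*x₁^2*(conj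 x₁) - 1*x₁^2*(conj x₁)*x₃ - 1*x₁^2*(conj x₁)^2 + 1*x₁^2*(conj x₁)^2*(conj x₃) + 1*x₁^2*(conj x₁)^2*x₃ - 1*x₁^2*(conj x₁)^2*x₃*(conj x₃) : ℂ) * e1 +
      (0 + 1*x₂*(conj x₂) - 1*x₂*(conj x₂)^2 - 1*x₂^2*(conj x₂) + 1*x₂^2*(conj x₂)^2 - 1*x₁*(conj x₁)*x₂*(conj x₂) : ℂ) * e2
  rw [Complex.sq_norm, Complex.sq_norm]
  have h := main
  rw [Complex.mul_conj, Complex.mul_conj] at h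
  exact_mod_cast h
end
end

section
/- For every (x₁,x₂,x₃) ∈ 𝔛 with Im(x₃) ≠ 0 the identity x₃·(conj(x₁) − conj(x₁)·x₃ − 1)·D₂₃ − (x₃ + conj(x₂) − x₃·conj(x₂))·D₃₁ = 2i·Im(x₃)·|x₁|²·D₁₂ holds. (This is the key identity showing that the identity map between the two complex structures of 𝔛* is pseudoconformal.) -/
noncomputable section

open Complex ComplexConjugate

/-- The key identity showing the identity map between the two complex
structures of 𝔛* is pseudoconformal. -/
theorem pseudoconformal_key_identity (x₁ x₂ x₃ : ℂ)
    (hx : memX x₁ x₂ x₃) (hIm : x₃.im ≠ 0) :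
    x₃ * (conj x₁ - conj x₁ * x₃ - 1) * D23 x₂ x₃
      - (x₃ + conj x₂ - x₃ * conj x₂) * D31 x₁ x₃
      = 2 * Complex.I * (x₃.im : ℂ) * (((‖x₁‖) ^ 2 : ℝ) : ℂ) * D12 x₁ x₂ := by
  obtain ⟨hx1, hx2, hx3, habs, hre⟩ := hx
  have hc1 : (starRingEnd ℂ) x₁ ≠ 0 := by simpa using hx1
  have hc3 : (starRingEnd ℂ) x₃ ≠ 0 := by simpa using hx3
  have key : ∀ z : ℂ, (((‖z‖) ^ 2 : ℝ) : ℂ) = z * conj z := fun z => by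
    rw [Complex.sq_norm]; push_cast [Complex.mul_conj]; ring
  have h1 : x₂ * conj x₂ = (x₁ * conj x₁) * (x₃ * conj x₃) := by
    have : (((‖x₂‖) ^ 2 : ℝ) : ℂ) = (((‖x₁‖) ^ 2 * (‖x₃‖) ^ 2 : ℝ) : ℂ) := by
      rw [habs]; push_cast; ring
    rw [key] at this
    rw [this]; push_cast [key]; ring
  have h2 : (x₁ * conj x₁) * (x₃ + conj x₃) =
      x₁ * conj x₁ + x₂ * conj x₂ - x₁ - conj x₁ - x₂ - conj x₂ + 1 := by
    have h := congrArg (Complex.ofReal) hre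
    push_cast at h
    have r1 : (x₁.re : ℂ) = (x₁ + conj x₁) / 2 := by
      rw [Complex.add_conj]; push_cast; ring
    have r2 : (x₂.re : ℂ) = (x₂ + conj x₂) / 2 := by
      rw [Complex.add_conj]; push_cast; ring
    have r3 : (x₃.re : ℂ) = (x₃ + conj x₃) / 2 := by
      rw [Complex.add_conj]; push_cast; ring
    have a1 : ((‖x₁‖ : ℂ)) ^ 2 = x₁ * conj x₁ := by
      rw [← key]; push_cast; ring
    have a2 : ((‖x₂‖ : ℂ)) ^ 2 = x₂ * conj x₂ := by
      rw [← key]; push_cast; ring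
    rw [r1, r2, r3, a1, a2] at h
    linear_combination h
  have him : 2 * Complex.I * (x₃.im : ℂ) = x₃ - conj x₃ := by
    rw [Complex.sub_conj]; push_cast; ring
  unfold D23 D31 D12
  rw [show (((‖x₂‖) ^ 2 / (‖x₃‖) ^ 2 : ℝ) : ℂ)
      = (x₂ * conj x₂) / (x₃ * conj x₃) by push_cast [← key]; ring]
  rw [key]
  field_simp
  linear_combination
    ((conj x₃ + conj x₂ - conj x₂ * conj x₃ - conj x₁ * conj x₃
        + conj x₁ * conj x₃ ^ 2 - conj x₁ * conj x₂ + conj x₁ * conj x₂ * conj x₃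
        - conj x₁ * conj x₂ * conj x₃ ^ 2) + x₃ * conj x₁ * conj x₂) * h1
    + (conj x₁ * conj x₂ * conj x₃ * (x₃ - conj x₃)) * h2
    - (conj x₁ * conj x₂ * (1 - conj x₁ - conj x₂) * conj x₃) * him
end
end
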